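/- For positive integers t ≤ k, the family G(k,t) (blocks X_n together with one chosen point from each of the other k−|X_n| consecutive classes around a t-cycle of pairwise disjoint classes X_0,…,X_{t−1}, where |X_n| = k−⌊t/2⌋ for 0 ≤ n ≤ ⌊(t−1)/2⌋ and |X_n| = k−⌊(t−1)/2⌋ otherwise) is an intersecting family of k-sets with transversal number τ(G(k,t)) = t. -/

import Mathlib

open Finset

variable {α : Type*} {β : Type*}

/-- `C` is a blocking set of the family `F`: it meets every block of `F`. -/
def IsBlocking (F : Set (Finset α)) (C : Finset α) : Prop :=
  ∀ B ∈ F, ∃ x ∈ B, x ∈ C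

/-- The transversal number `τ(F)`: the minimum size of a (finite) blocking set. -/
noncomputable def tau (F : Set (Finset α)) : ℕ :=
  sInf {n | ∃ C : Finset α, C.card = n ∧ IsBlocking F C}

/-- The family `F^⊤` of transversals, i.e. minimum-size blocking sets of `F`. -/
noncomputable def transversals (F : Set (Finset α)) : Set (Finset α) :=
  {C | IsBlocking F C ∧ C.card = tau F}

/-- A family is intersecting if any two of its blocks meet. -/
def FamIntersecting (F : Set (Finset α)) : Prop :=
  ∀ A ∈ F, ∀ B ∈ F, ∃ x ∈ A, x ∈ B

/-- A family is `k`-uniform if all its blocks have size `k`. -/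
def FamUniform (F : Set (Finset α)) (k : ℕ) : Prop :=
  ∀ B ∈ F, B.card = k

/-- `F` has a finite blocking set (τ(F) < ∞). -/
def HasBlocking (F : Set (Finset α)) : Prop :=
  ∃ C : Finset α, IsBlocking F C

/-- Maximal intersecting family of `k`-sets: uniform, τ < ∞ and `F = F^⊤`. -/
noncomputable def MIF (F : Set (Finset α)) (k : ℕ) : Prop :=
  FamUniform F k ∧ HasBlocking F ∧ F = transversals F

/-- Closed intersecting family `CIF(k,t)`: a `k`-uniform intersecting family with
`τ(F) = t ≤ k - 1` and `F = (F ∪ F^⊤)^⊤`. -/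
noncomputable def CIF (F : Set (Finset α)) (k t : ℕ) : Prop :=
  FamUniform F k ∧ FamIntersecting F ∧ tau F = t ∧ t ≤ k - 1 ∧
    F = transversals (F ∪ transversals F)

/-- The point set of a family. -/
def pts (F : Set (Finset α)) : Set α := ⋃ B ∈ F, (B : Set α)

/-- `G ⊛ H`: all unions `A ∪ B` with `A ∈ G`, `B ∈ H` (for point-disjoint families
these are disjoint unions). -/
def star [DecidableEq α] (G H : Set (Finset α)) : Set (Finset α) :=
  {C | ∃ A ∈ G, ∃ B ∈ H, C = A ∪ B}


/-- The size of the class `X_n` in the cycle construction `G(k,t)`. -/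
def sz (k t n : ℕ) : ℕ := if n ≤ (t - 1) / 2 then k - t / 2 else k - (t - 1) / 2

/-- The class `X_n` of the cycle construction: points `(n, p)` with `p < |X_n|`. -/
def cls (k t n : ℕ) : Finset (ℕ × ℕ) := {n} ×ˢ Finset.range (sz k t n)

/-- The family `G(k,t)`: all `k`-sets consisting of a class `X_n` together with one
chosen point from each of the next `k - |X_n|` classes around the `t`-cycle. -/
def Gfam (k t : ℕ) : Set (Finset (ℕ × ℕ)) :=
  {B | ∃ n < t, ∃ g : ℕ → ℕ × ℕ,
    (∀ i, 1 ≤ i → i ≤ k - sz k t n → g i ∈ cls k t ((n + i) % t)) ∧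
    B = cls k t n ∪ Finset.image g (Finset.Icc 1 (k - sz k t n))}

section AuxStmt13

lemma aux_mod2 (a t : ℕ) (h : a < 2 * t) :
    (t ≤ a ∧ a % t = a - t) ∨ (a < t ∧ a % t = a) := by
  rcases le_or_gt t a with h1 | h1
  · exact Or.inl ⟨h1, by rw [Nat.mod_eq_sub_mod h1, Nat.mod_eq_of_lt (by omega)]⟩
  · exact Or.inr ⟨h1, Nat.mod_eq_of_lt h1⟩

variable {k t : ℕ}

lemma aux_sz_le (htk : t ≤ k) (n : ℕ) : sz k t n ≤ k := by
  unfold sz; split <;> omega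

lemma aux_sz_pos (ht : 1 ≤ t) (htk : t ≤ k) (n : ℕ) : 1 ≤ sz k t n := by
  unfold sz; split <;> omega

lemma aux_msz_eq (htk : t ≤ k) (n : ℕ) :
    k - sz k t n = if n ≤ (t - 1) / 2 then t / 2 else (t - 1) / 2 := by
  unfold sz; split <;> omega

lemma aux_msz_lt (ht : 1 ≤ t) (htk : t ≤ k) (n : ℕ) : k - sz k t n < t := by
  rw [aux_msz_eq htk n]; split <;> omega

lemma aux_msz_le_half (htk : t ≤ k) (n : ℕ) : k - sz k t n ≤ t / 2 := by
  rw [aux_msz_eq htk n]; split <;> omega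

lemma aux_key (htk : t ≤ k) {n n' : ℕ} (hn : n < t) (hn' : n' < t)
    (hlt : n < n') : n' - n ≤ k - sz k t n ∨ n + t - n' ≤ k - sz k t n' := by
  rw [aux_msz_eq htk n, aux_msz_eq htk n']
  split <;> split <;> omega

lemma aux_helper (n i t f : ℕ) (hn : n < t) (h2 : 1 ≤ i) (h3 : i < t)
    (h : (n + i) % t = f) :
    (f + t - n) % t = i ∧ (f + t - i) % t = n ∧ f < t := by
  have hf : f < t := h ▸ Nat.mod_lt _ (by omega)
  rcases aux_mod2 (n + i) t (by omega) with ⟨h4, h5⟩ | ⟨h4, h5⟩ <;> rw [h5] at h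
  · refine ⟨?_, ?_, hf⟩
    · rw [show f + t - n = i by omega, Nat.mod_eq_of_lt h3]
    · rw [show f + t - i = n by omega, Nat.mod_eq_of_lt hn]
  · refine ⟨?_, ?_, hf⟩
    · rw [show f + t - n = i + t by omega, Nat.add_mod_right, Nat.mod_eq_of_lt h3]
    · rw [show f + t - i = n + t by omega, Nat.add_mod_right, Nat.mod_eq_of_lt hn]

lemma aux_mem_cls {n : ℕ} {x : ℕ × ℕ} : x ∈ cls k t n ↔ x.1 = n ∧ x.2 < sz k t n := by
  obtain ⟨a, b⟩ := x
  simp only [cls, Finset.mem_product, Finset.mem_singleton, Finset.mem_range]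

lemma aux_card_cls (n : ℕ) : (cls k t n).card = sz k t n := by
  simp [cls]

lemma gfam_uniform (ht : 1 ≤ t) (htk : t ≤ k) : FamUniform (Gfam k t) k := by
  rintro B ⟨n, hn, g, hg, rfl⟩
  have hm := aux_msz_lt ht htk n
  have hdisj : Disjoint (cls k t n) (Finset.image g (Finset.Icc 1 (k - sz k t n))) := by
    rw [Finset.disjoint_left]
    rintro x hx hx'
    obtain ⟨i, hi, rfl⟩ := Finset.mem_image.1 hx'
    rw [Finset.mem_Icc] at hi
    have h1 := (aux_mem_cls.1 (hg i hi.1 hi.2)).1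
    have h2 := (aux_mem_cls.1 hx).1
    rcases aux_mod2 (n + i) t (by omega) with ⟨_, h5⟩ | ⟨_, h5⟩ <;> omega
  rw [Finset.card_union_of_disjoint hdisj, aux_card_cls,
    Finset.card_image_of_injOn, Nat.card_Icc]
  · have := aux_sz_le htk n; omega
  · intro i hi j hj hij
    simp only [Finset.coe_Icc, Set.mem_Icc] at hi hj
    have h1 := (aux_mem_cls.1 (hg i hi.1 hi.2)).1
    have h2 := (aux_mem_cls.1 (hg j hj.1 hj.2)).1
    rw [hij] at h1
    rcases aux_mod2 (n + i) t (by omega) with ⟨_, h5⟩ | ⟨_, h5⟩ <;>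
      rcases aux_mod2 (n + j) t (by omega) with ⟨_, h6⟩ | ⟨_, h6⟩ <;> omega

lemma gfam_meet (ht : 1 ≤ t) (htk : t ≤ k) {n n' : ℕ} {g g' : ℕ → ℕ × ℕ}
    (hn : n < t) (hn' : n' < t) (hlt : n < n')
    (hg : ∀ i, 1 ≤ i → i ≤ k - sz k t n → g i ∈ cls k t ((n + i) % t))
    (hg' : ∀ i, 1 ≤ i → i ≤ k - sz k t n' → g' i ∈ cls k t ((n' + i) % t)) :
    ∃ x ∈ cls k t n ∪ Finset.image g (Finset.Icc 1 (k - sz k t n)),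
      x ∈ cls k t n' ∪ Finset.image g' (Finset.Icc 1 (k - sz k t n')) := by
  rcases aux_key htk hn hn' hlt with h | h
  · refine ⟨g (n' - n), Finset.mem_union_right _
      (Finset.mem_image.2 ⟨n' - n, Finset.mem_Icc.2 ⟨by omega, h⟩, rfl⟩), ?_⟩
    apply Finset.mem_union_left
    have := hg (n' - n) (by omega) h
    rwa [show n + (n' - n) = n' by omega, Nat.mod_eq_of_lt hn'] at this
  · refine ⟨g' (n + t - n'), ?_, Finset.mem_union_right _
      (Finset.mem_image.2 ⟨n + t - n', Finset.mem_Icc.2 ⟨by omega, h⟩, rfl⟩)⟩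
    apply Finset.mem_union_left
    have := hg' (n + t - n') (by omega) h
    rwa [show n' + (n + t - n') = n + t by omega, Nat.add_mod_right,
      Nat.mod_eq_of_lt hn] at this

lemma gfam_intersecting (ht : 1 ≤ t) (htk : t ≤ k) : FamIntersecting (Gfam k t) := by
  rintro A ⟨n, hn, g, hg, rfl⟩ B ⟨n', hn', g', hg', rfl⟩
  rcases lt_trichotomy n n' with h | h | h
  · exact gfam_meet ht htk hn hn' h hg hg'
  · subst h
    exact ⟨(n, 0), Finset.mem_union_left _ (aux_mem_cls.2 ⟨rfl, aux_sz_pos ht htk n⟩),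
      Finset.mem_union_left _ (aux_mem_cls.2 ⟨rfl, aux_sz_pos ht htk n⟩)⟩
  · obtain ⟨x, hx1, hx2⟩ := gfam_meet ht htk hn' hn h hg' hg
    exact ⟨x, hx2, hx1⟩

lemma tau_lower (ht : 1 ≤ t) (htk : t ≤ k) (C : Finset (ℕ × ℕ))
    (hC : IsBlocking (Gfam k t) C) : t ≤ C.card := by
  classical
  set S : Finset ℕ := (Finset.range t).filter (fun n => (C ∩ cls k t n).Nonempty) with hS
  set F : Finset ℕ := (Finset.range t).filter (fun n => cls k t n ⊆ C) with hF
  set Cov : ℕ → Finset ℕ := fun f =>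
    (Finset.range t).filter
      (fun n => ∃ i, 1 ≤ i ∧ i ≤ k - sz k t n ∧ (n + i) % t = f) with hCov
  have stepA : ∀ n ∈ Finset.range t, n ∈ S ∪ F.biUnion Cov := by
    intro n hnr
    have hn : n < t := Finset.mem_range.1 hnr
    by_contra hcon
    rw [Finset.mem_union, Finset.mem_biUnion] at hcon
    push_neg at hcon
    obtain ⟨hnS, hnF⟩ := hcon
    have hex : ∀ i, 1 ≤ i → i ≤ k - sz k t n →
        ∃ x, x ∈ cls k t ((n + i) % t) ∧ x ∉ C := by
      intro i h1 h2
      by_contra hno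
      push_neg at hno
      have hfF : (n + i) % t ∈ F := by
        rw [hF, Finset.mem_filter, Finset.mem_range]
        exact ⟨Nat.mod_lt _ (by omega), fun x hx => hno x hx⟩
      have hmem : n ∈ Cov ((n + i) % t) := by
        rw [hCov, Finset.mem_filter]
        exact ⟨hnr, i, h1, h2, rfl⟩
      exact hnF _ hfF hmem
    set g : ℕ → ℕ × ℕ := fun i =>
      if h : ∃ x, x ∈ cls k t ((n + i) % t) ∧ x ∉ C then h.choose else (0, 0) with hg
    have hgmem : ∀ i, 1 ≤ i → i ≤ k - sz k t n →
        g i ∈ cls k t ((n + i) % t) ∧ g i ∉ C := by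
      intro i h1 h2
      have h := hex i h1 h2
      simp only [hg, dif_pos h]
      exact h.choose_spec
    have hB : (cls k t n ∪ Finset.image g (Finset.Icc 1 (k - sz k t n))) ∈ Gfam k t :=
      ⟨n, hn, g, fun i h1 h2 => (hgmem i h1 h2).1, rfl⟩
    obtain ⟨x, hxB, hxC⟩ := hC _ hB
    rcases Finset.mem_union.1 hxB with hx | hx
    · rw [hS] at hnS
      exact hnS (Finset.mem_filter.2 ⟨hnr, x, Finset.mem_inter.2 ⟨hxC, hx⟩⟩)
    · obtain ⟨i, hi, rfl⟩ := Finset.mem_image.1 hx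
      rw [Finset.mem_Icc] at hi
      exact (hgmem i hi.1 hi.2).2 hxC
  have stepB : ∀ f, f < t → (Cov f).card + 1 ≤ sz k t f := by
    intro f hf
    set D : Finset ℕ := (Finset.Icc 1 (t / 2)).filter
      (fun i => i ≤ k - sz k t ((f + t - i) % t)) with hD
    have hmap : ∀ n ∈ Cov f, (f + t - n) % t ∈ D ∧
        (f + t - ((f + t - n) % t)) % t = n := by
      intro n hn
      rw [hCov, Finset.mem_filter, Finset.mem_range] at hn
      obtain ⟨hnt, i, h1, h2, h3⟩ := hn
      have hmlt : k - sz k t n < t := aux_msz_lt ht htk n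
      obtain ⟨e1, e2, _⟩ := aux_helper n i t f hnt h1 (by omega) h3
      rw [e1]
      refine ⟨?_, e2⟩
      rw [hD, Finset.mem_filter, Finset.mem_Icc, e2]
      exact ⟨⟨h1, le_trans h2 (aux_msz_le_half htk n)⟩, h2⟩
    have hcard : (Cov f).card ≤ D.card := by
      apply Finset.card_le_card_of_injOn (fun n => (f + t - n) % t)
        (fun n hn => (hmap n hn).1)
      intro n hn n' hn' he
      have he' : (f + t - n) % t = (f + t - n') % t := he
      rw [← (hmap n hn).2, ← (hmap n' hn').2, he']
    rcases le_or_gt f ((t - 1) / 2) with hfle | hfgt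
    · have hsub : D ⊆ Finset.Icc 1 (t - t / 2 - 1) := by
        intro i hi
        rw [hD, Finset.mem_filter, Finset.mem_Icc] at hi
        obtain ⟨⟨hi1, hi2⟩, hi3⟩ := hi
        rw [Finset.mem_Icc]
        refine ⟨hi1, ?_⟩
        by_contra hbig
        push_neg at hbig
        have hmod : (f + t - i) % t = f + t - i := Nat.mod_eq_of_lt (by omega)
        rw [hmod, aux_msz_eq htk _, if_neg (by omega)] at hi3
        omega
      have hDle := Finset.card_le_card hsub
      rw [Nat.card_Icc] at hDle
      have hszf : sz k t f = k - t / 2 := by unfold sz; rw [if_pos hfle]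
      omega
    · have hDle := Finset.card_le_card (hD ▸ Finset.filter_subset _ _ :
        D ⊆ Finset.Icc 1 (t / 2))
      rw [Nat.card_Icc] at hDle
      have hszf : sz k t f = k - (t - 1) / 2 := by unfold sz; rw [if_neg (by omega)]
      omega
  have h1 : t ≤ S.card + ∑ f ∈ F, (Cov f).card := by
    calc t = (Finset.range t).card := (Finset.card_range t).symm
      _ ≤ (S ∪ F.biUnion Cov).card := Finset.card_le_card stepA
      _ ≤ S.card + (F.biUnion Cov).card := Finset.card_union_le _ _
      _ ≤ S.card + ∑ f ∈ F, (Cov f).card := Nat.add_le_add_left Finset.card_biUnion_le _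
  have h2 : ∑ f ∈ F, (Cov f).card + F.card ≤ ∑ f ∈ F, sz k t f := by
    calc ∑ f ∈ F, (Cov f).card + F.card = ∑ f ∈ F, ((Cov f).card + 1) := by
          rw [Finset.sum_add_distrib, Finset.sum_const, smul_eq_mul, mul_one]
      _ ≤ ∑ f ∈ F, sz k t f := Finset.sum_le_sum
          (fun f hf => stepB f (Finset.mem_range.1 (Finset.mem_filter.1 (hF ▸ hf)).1))
  have hFS : F ⊆ S := by
    intro f hf
    rw [hF, Finset.mem_filter] at hf
    rw [hS, Finset.mem_filter]
    refine ⟨hf.1, ?_⟩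
    obtain ⟨x, hx⟩ : (cls k t f).Nonempty := by
      rw [← Finset.card_pos, aux_card_cls]; exact aux_sz_pos ht htk f
    exact ⟨x, Finset.mem_inter.2 ⟨hf.2 hx, hx⟩⟩
  have h3 : ∑ n ∈ Finset.range t, (C ∩ cls k t n).card ≤ C.card := by
    rw [← Finset.card_biUnion]
    · exact Finset.card_le_card (Finset.biUnion_subset.2 (fun n _ => Finset.inter_subset_left))
    · intro a _ b _ hab
      simp only [Function.onFun]; rw [Finset.disjoint_left]
      intro x hx1 hx2
      have e1 := (aux_mem_cls.1 (Finset.mem_inter.1 hx1).2).1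
      have e2 := (aux_mem_cls.1 (Finset.mem_inter.1 hx2).2).1
      omega
  have h4 : ∑ f ∈ F, sz k t f + (S.card - F.card) ≤
      ∑ n ∈ Finset.range t, (C ∩ cls k t n).card := by
    have e1 : ∑ n ∈ S, (C ∩ cls k t n).card ≤
        ∑ n ∈ Finset.range t, (C ∩ cls k t n).card :=
      Finset.sum_le_sum_of_subset (hS ▸ Finset.filter_subset _ _)
    have e2 : ∑ n ∈ S \ F, (C ∩ cls k t n).card + ∑ n ∈ F, (C ∩ cls k t n).card
        = ∑ n ∈ S, (C ∩ cls k t n).card := Finset.sum_sdiff hFS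
    have e3 : ∑ n ∈ F, (C ∩ cls k t n).card = ∑ f ∈ F, sz k t f := by
      refine Finset.sum_congr rfl (fun f hf => ?_)
      rw [hF, Finset.mem_filter] at hf
      rw [Finset.inter_eq_right.2 hf.2, aux_card_cls]
    have e4 : S.card - F.card ≤ ∑ n ∈ S \ F, (C ∩ cls k t n).card := by
      rw [← Finset.card_sdiff_of_subset hFS]
      calc (S \ F).card = ∑ n ∈ S \ F, 1 := by simp
        _ ≤ ∑ n ∈ S \ F, (C ∩ cls k t n).card := Finset.sum_le_sum (fun n hn => by
            have hnS := (Finset.mem_sdiff.1 hn).1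
            rw [hS, Finset.mem_filter] at hnS
            exact Finset.card_pos.2 hnS.2)
    omega
  have hFcard : F.card ≤ S.card := Finset.card_le_card hFS
  omega

end AuxStmt13

theorem stmt_13 (k t : ℕ) (ht : 1 ≤ t) (htk : t ≤ k) :
    FamIntersecting (Gfam k t) ∧ FamUniform (Gfam k t) k ∧
    tau (Gfam k t) = t := by
  refine ⟨gfam_intersecting ht htk, gfam_uniform ht htk, ?_⟩
  have hub : IsBlocking (Gfam k t) ((Finset.range t).image (fun n => (n, 0))) := by
    rintro B ⟨n, hn, g, hg, rfl⟩
    exact ⟨(n, 0), Finset.mem_union_left _ (aux_mem_cls.2 ⟨rfl, aux_sz_pos ht htk n⟩),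
      Finset.mem_image.2 ⟨n, Finset.mem_range.2 hn, rfl⟩⟩
  have hcard : ((Finset.range t).image (fun n => ((n, 0) : ℕ × ℕ))).card = t := by
    rw [Finset.card_image_of_injective _ (fun a b h => (Prod.ext_iff.1 h).1),
      Finset.card_range]
  apply le_antisymm
  · exact Nat.sInf_le ⟨_, hcard, hub⟩
  · exact le_csInf ⟨t, _, hcard, hub⟩ (by rintro m ⟨C, rfl, hbl⟩; exact tau_lower ht htk C hbl)
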